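/- Let m ≥ 2, let s_1,…,s_m be nonnegative integers with total t = s_1+⋯+s_m, and let l_j, u_j be integers with 0 ≤ l_j ≤ u_j ≤ s_j and l_j + u_j = s_j for each j (symmetric core constraints). For a nonnegative integer n let N(n) = ∑ ∏_{j=1}^m C(s_j, x_j), the sum over all x ∈ ℕ^m with x_1+⋯+x_m = n and l_j ≤ x_j ≤ u_j for all j. Then for any two sample sizes n, n' with 2n ≥ t and n < n' ≤ t, one has N(n)·C(t, n') ≥ N(n')·C(t, n); equivalently, the multiple hypergeometric symmetric core probability P_n[X ∈ B] = N(n)/C(t,n) satisfies P_n[X ∈ B] ≥ P_{n'}[X ∈ B]. -/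

import Mathlib

open Finset

/-- `g` is a nonneg, symmetric-about-`c/2`, unimodal function supported in `[0,c]`. -/
def GoodFn (c : ℤ) (g : ℤ → ℤ) : Prop :=
  (∀ x, 0 ≤ g x) ∧ (∀ x, g x = g (c - x)) ∧
  (∀ x y, x ≤ y → x + y ≤ c → g x ≤ g y) ∧ (∀ x, x < 0 → g x = 0)

lemma GoodFn.nonneg {c g} (h : GoodFn c g) : ∀ x, 0 ≤ g x := h.1
lemma GoodFn.symm {c g} (h : GoodFn c g) : ∀ x, g x = g (c - x) := h.2.1
lemma GoodFn.mono {c g} (h : GoodFn c g) : ∀ x y, x ≤ y → x + y ≤ c → g x ≤ g y := h.2.2.1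
lemma GoodFn.zero_neg {c g} (h : GoodFn c g) : ∀ x, x < 0 → g x = 0 := h.2.2.2

lemma GoodFn.zero_gt {c g} (h : GoodFn c g) (x : ℤ) (hx : c < x) : g x = 0 := by
  rw [h.symm x]; exact h.zero_neg _ (by omega)

lemma GoodFn.zero_outside {c g} (h : GoodFn c g) (x : ℤ) (hx : x ∉ Finset.Icc 0 c) :
    g x = 0 := by
  rw [Finset.mem_Icc] at hx
  rcases lt_or_ge x 0 with h0 | h0
  · exact h.zero_neg _ h0
  · exact h.zero_gt _ (by omega)

/-- convolution, using that `g₁` is supported in `[0, c₁]`. -/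
noncomputable def convFn (c₁ : ℤ) (g₁ g₂ : ℤ → ℤ) : ℤ → ℤ :=
  fun x => ∑ k ∈ Finset.Icc 0 c₁, g₁ k * g₂ (x - k)

lemma sum_reflect (f : ℤ → ℤ) (a b T : ℤ) :
    ∑ k ∈ Finset.Icc a b, f k = ∑ k ∈ Finset.Icc (T - b) (T - a), f (T - k) := by
  apply Finset.sum_nbij' (fun k => T - k) (fun k => T - k) <;>
    simp (config := { contextual := true }) [Finset.mem_Icc] <;> omega

lemma sum_shift (f : ℤ → ℤ) (a b d : ℤ) :
    ∑ k ∈ Finset.Icc a b, f k = ∑ k ∈ Finset.Icc (a + d) (b + d), f (k - d) := by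
  apply Finset.sum_nbij' (fun k => k + d) (fun k => k - d) <;>
    simp (config := { contextual := true }) [Finset.mem_Icc] <;> omega

lemma convFn_ext {c₁ g₁} (h₁ : GoodFn c₁ g₁) (g₂ : ℤ → ℤ) (T : Finset ℤ)
    (hT : Finset.Icc 0 c₁ ⊆ T) (x : ℤ) :
    convFn c₁ g₁ g₂ x = ∑ k ∈ T, g₁ k * g₂ (x - k) := by
  exact Finset.sum_subset hT (fun k _ hk => by rw [h₁.zero_outside k hk, zero_mul])

lemma convFn_comm {c₁ c₂ g₁ g₂} (h₁ : GoodFn c₁ g₁) (h₂ : GoodFn c₂ g₂) (x : ℤ) :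
    convFn c₁ g₁ g₂ x = convFn c₂ g₂ g₁ x := by
  have key : convFn c₁ g₁ g₂ x
      = ∑ k ∈ Finset.Icc (min 0 (x - c₂)) (max c₁ x), g₁ k * g₂ (x - k) :=
    convFn_ext h₁ g₂ _ (by
      intro k hk; rw [Finset.mem_Icc] at *; omega) x
  rw [key, sum_reflect _ _ _ x]
  rw [convFn_ext h₂ g₁ (Finset.Icc (x - max c₁ x) (x - min 0 (x - c₂)))
    (by intro k hk; rw [Finset.mem_Icc] at *; omega) x]
  apply Finset.sum_congr rfl
  intro k _; rw [mul_comm]; ring_nf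

lemma convFn_symm {c₁ c₂ g₁ g₂} (h₁ : GoodFn c₁ g₁) (h₂ : GoodFn c₂ g₂) (x : ℤ) :
    convFn c₁ g₁ g₂ x = convFn c₁ g₁ g₂ (c₁ + c₂ - x) := by
  unfold convFn
  conv_rhs => rw [sum_reflect _ 0 c₁ c₁]
  simp only [sub_self, sub_zero]
  apply Finset.sum_congr rfl
  intro k hk
  rw [← h₁.symm k]
  congr 1
  rw [h₂.symm (x - k)]
  congr 1
  ring

lemma convFn_step {c₁ c₂ g₁ g₂} (h₁ : GoodFn c₁ g₁) (h₂ : GoodFn c₂ g₂) (x : ℤ)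
    (hx : 2 * x < c₁ + c₂) :
    convFn c₁ g₁ g₂ x ≤ convFn c₁ g₁ g₂ (x + 1) := by
  rw [convFn_comm h₁ h₂ x, convFn_comm h₁ h₂ (x+1)]
  set J : Finset ℤ := Finset.Icc 0 (c₂ + 1) with hJ
  have hsub : Finset.Icc (0:ℤ) c₂ ⊆ J := by intro k hk; rw [Finset.mem_Icc] at *; omega
  have e1 : convFn c₂ g₂ g₁ (x + 1) = ∑ j ∈ J, g₂ j * g₁ (x + 1 - j) :=
    convFn_ext h₂ g₁ J hsub (x+1)
  have e2 : convFn c₂ g₂ g₁ x = ∑ j ∈ J, g₂ (j - 1) * g₁ (x + 1 - j) := by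
    rw [convFn_ext h₂ g₁ (Finset.Icc 0 c₂) (le_refl _) x, sum_shift _ 0 c₂ 1]
    rw [zero_add, hJ]
    have step1 : ∑ k ∈ Finset.Icc (1:ℤ) (c₂+1), g₂ (k - 1) * g₁ (x - (k - 1))
        = ∑ k ∈ Finset.Icc (1:ℤ) (c₂+1), g₂ (k - 1) * g₁ (x + 1 - k) := by
      apply Finset.sum_congr rfl
      intro k _
      congr 1
      ring_nf
    rw [step1]
    exact Finset.sum_subset
      (by intro k hk; rw [Finset.mem_Icc] at *; omega)
      (fun k hk hk' => by
        rw [Finset.mem_Icc] at *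
        have : k = 0 := by omega
        subst this
        rw [h₂.zero_neg (0 - 1) (by omega), zero_mul])
  have key : ∀ j ∈ J, 0 ≤ (g₂ j - g₂ (j - 1)) * (g₁ (x + 1 - j) - g₁ (x - c₂ + j)) := by
    intro j hj
    rw [Finset.mem_Icc] at hj
    rcases lt_trichotomy (2 * j) (c₂ + 1) with hc | hc | hc
    · -- 2j ≤ c₂ : both factors nonneg
      apply mul_nonneg
      · have := h₂.mono (j - 1) j (by omega) (by omega); omega
      · have := h₁.mono (x - c₂ + j) (x + 1 - j) (by omega) (by omega); omega
    · -- 2j = c₂ + 1 : second factor zero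
      have : x + 1 - j = x - c₂ + j := by omega
      rw [this, sub_self, mul_zero]
    · -- 2j ≥ c₂ + 2 : both factors nonpos
      have f1 : g₂ j - g₂ (j - 1) ≤ 0 := by
        have e := h₂.symm j
        have := h₂.mono (c₂ - j) (j - 1) (by omega) (by omega)
        omega
      have f2 : g₁ (x + 1 - j) - g₁ (x - c₂ + j) ≤ 0 := by
        have := h₁.mono (x + 1 - j) (x - c₂ + j) (by omega) (by omega); omega
      nlinarith
  have twoD : 2 * (convFn c₂ g₂ g₁ (x+1) - convFn c₂ g₂ g₁ x)
      = ∑ j ∈ J, (g₂ j - g₂ (j - 1)) * (g₁ (x + 1 - j) - g₁ (x - c₂ + j)) := by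
    have eD : convFn c₂ g₂ g₁ (x+1) - convFn c₂ g₂ g₁ x
        = ∑ j ∈ J, (g₂ j - g₂ (j - 1)) * g₁ (x + 1 - j) := by
      rw [e1, e2, ← Finset.sum_sub_distrib]
      apply Finset.sum_congr rfl; intro j _; ring
    have eD' : convFn c₂ g₂ g₁ (x+1) - convFn c₂ g₂ g₁ x
        = ∑ j ∈ J, (g₂ (j - 1) - g₂ j) * g₁ (x - c₂ + j) := by
      rw [eD, sum_reflect _ 0 (c₂ + 1) (c₂ + 1), hJ]
      simp only [sub_self, sub_zero]
      apply Finset.sum_congr rfl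
      intro j _
      have s1 : g₂ (c₂ + 1 - j) = g₂ (j - 1) := by
        rw [h₂.symm (c₂ + 1 - j)]; congr 1; ring
      have s2 : g₂ (c₂ + 1 - j - 1) = g₂ j := by
        rw [h₂.symm (c₂ + 1 - j - 1)]; congr 1; ring
      rw [s1, s2]
      congr 1
      ring
    have : 2 * (convFn c₂ g₂ g₁ (x+1) - convFn c₂ g₂ g₁ x)
        = (∑ j ∈ J, (g₂ j - g₂ (j - 1)) * g₁ (x + 1 - j))
          + ∑ j ∈ J, (g₂ (j - 1) - g₂ j) * g₁ (x - c₂ + j) := by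
      rw [← eD, ← eD']; ring
    rw [this, ← Finset.sum_add_distrib]
    apply Finset.sum_congr rfl; intro j _; ring
  have : 0 ≤ 2 * (convFn c₂ g₂ g₁ (x+1) - convFn c₂ g₂ g₁ x) := by
    rw [twoD]; exact Finset.sum_nonneg key
  omega

lemma convFn_good {c₁ c₂ g₁ g₂} (h₁ : GoodFn c₁ g₁) (h₂ : GoodFn c₂ g₂) :
    GoodFn (c₁ + c₂) (convFn c₁ g₁ g₂) := by
  refine ⟨?_, ?_, ?_, ?_⟩
  · intro x
    exact Finset.sum_nonneg fun k _ => mul_nonneg (h₁.nonneg k) (h₂.nonneg _)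
  · intro x; exact convFn_symm h₁ h₂ x
  · intro x y hxy hsum
    obtain ⟨d, hd⟩ : ∃ d : ℕ, y = x + d := ⟨(y - x).toNat, by omega⟩
    subst hd
    clear hxy
    induction d generalizing x with
    | zero => simp
    | succ d ih =>
      rcases eq_or_lt_of_le hsum with he | hlt
      · have := convFn_symm h₁ h₂ (x + (d+1 : ℕ))
        have harg : c₁ + c₂ - (x + (d+1:ℕ)) = x := by push_cast at he ⊢; omega
        rw [harg] at this
        omega
      · have step := convFn_step h₁ h₂ x (by push_cast at hlt ⊢; omega)
        have ih' := ih (x + 1) (by push_cast at hlt ⊢; omega)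
        have harg : x + 1 + (d:ℕ) = x + ((d:ℕ)+1) := by push_cast; ring
        rw [harg] at ih'
        push_cast at ih' ⊢
        omega
  · intro x hx
    apply Finset.sum_eq_zero
    intro k hk
    rw [Finset.mem_Icc] at hk
    rw [h₂.zero_neg (x - k) (by omega), mul_zero]

lemma choose_le_of_le_half {s x y : ℕ} (hxy : x ≤ y) (hy : 2 * y ≤ s) :
    s.choose x ≤ s.choose y := by
  induction y with
  | zero => interval_cases x; rfl
  | succ y ih =>
    rcases Nat.eq_or_lt_of_le hxy with he | hlt
    · rw [he]
    · have h1 : s.choose x ≤ s.choose y := ih (by omega) (by omega)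
      have h2 : s.choose y ≤ s.choose (y + 1) :=
        Nat.choose_le_succ_of_lt_half_left (by omega)
      omega

lemma choose_mono_middle {s x y : ℕ} (hxy : x ≤ y) (hsum : x + y ≤ s) :
    s.choose x ≤ s.choose y := by
  rcases le_or_gt (2 * y) s with h | h
  · exact choose_le_of_le_half hxy h
  · have hy : y ≤ s := by omega
    rw [← Nat.choose_symm hy]
    exact choose_le_of_le_half (by omega) (by omega)

/-- the binomial "box" function: `C(s,k)` on `[l,u]`, else 0. -/
def gfun (s l u : ℕ) : ℤ → ℤ :=
  fun k => if (l:ℤ) ≤ k ∧ k ≤ (u:ℤ) then ((s.choose k.toNat : ℕ) : ℤ) else 0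

lemma gfun_good (s l u : ℕ) (hlu : l ≤ u) (hus : u ≤ s) (hsym : l + u = s) :
    GoodFn (s : ℤ) (gfun s l u) := by
  refine ⟨?_, ?_, ?_, ?_⟩
  · intro x; unfold gfun; split <;> positivity
  · intro x
    unfold gfun
    by_cases hx : (l:ℤ) ≤ x ∧ x ≤ (u:ℤ)
    · have hx' : (l:ℤ) ≤ (s:ℤ) - x ∧ (s:ℤ) - x ≤ (u:ℤ) := by omega
      rw [if_pos hx, if_pos hx']
      have h1 : ((s:ℤ) - x).toNat = s - x.toNat := by omega
      have h2 : x.toNat ≤ s := by omega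
      rw [h1, Nat.choose_symm h2]
    · have hx' : ¬((l:ℤ) ≤ (s:ℤ) - x ∧ (s:ℤ) - x ≤ (u:ℤ)) := by omega
      rw [if_neg hx, if_neg hx']
  · intro x y hxy hs
    unfold gfun
    by_cases hx : (l:ℤ) ≤ x ∧ x ≤ (u:ℤ)
    · have hy : (l:ℤ) ≤ y ∧ y ≤ (u:ℤ) := by omega
      rw [if_pos hx, if_pos hy]
      have : s.choose x.toNat ≤ s.choose y.toNat :=
        choose_mono_middle (by omega) (by omega)
      exact_mod_cast this
    · rw [if_neg hx]
      split <;> positivity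
  · intro x hx
    unfold gfun
    rw [if_neg (by omega)]

section Main

variable {m : ℕ} (s l u : Fin m → ℕ)

/-- iterated convolution over a list of coordinates -/
noncomputable def GF : List (Fin m) → ℤ → ℤ
  | [] => fun x => if x = 0 then 1 else 0
  | a :: L => convFn (s a) (gfun (s a) (l a) (u a)) (GF L)

lemma delta_good : GoodFn 0 (fun x : ℤ => if x = 0 then (1:ℤ) else 0) := by
  refine ⟨?_, ?_, ?_, ?_⟩
  · intro x; simp only; split <;> norm_num
  · intro x
    simp only
    by_cases hx : x = 0
    · subst hx; norm_num
    · rw [if_neg hx, if_neg (by omega)]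
  · intro x y hxy hs
    simp only
    by_cases hx : x = 0
    · have : y = 0 := by omega
      subst hx; subst this; exact le_refl _
    · rw [if_neg hx]; split <;> norm_num
  · intro x hx; simp only; rw [if_neg (by omega)]

lemma GF_good (hlu : ∀ j, l j ≤ u j) (hus : ∀ j, u j ≤ s j) (hsym : ∀ j, l j + u j = s j) :
    ∀ L : List (Fin m),
    GoodFn ((L.map fun a => (s a : ℤ)).sum) (GF s l u L)
  | [] => by simpa [GF] using delta_good
  | a :: L => by
    have h1 := gfun_good (s a) (l a) (u a) (hlu a) (hus a) (hsym a)
    have h2 := GF_good hlu hus hsym L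
    simpa [GF] using convFn_good h1 h2

end Main

section Peel

variable {m : ℕ}

lemma peel_lemma (t : Fin m → Finset ℕ) (j : Fin m) (F : ℕ → ℤ) (H : Fin m → ℕ → ℤ) (r : ℤ) :
    ∑ x ∈ Fintype.piFinset t,
      (if (∑ i, ((x i : ℕ) : ℤ)) = r then F (x j) * ∏ i ∈ Finset.univ.erase j, H i (x i) else 0)
    = ∑ v ∈ t j, F v * ∑ x ∈ Fintype.piFinset (Function.update t j {0}),
        (if (∑ i, ((x i : ℕ) : ℤ)) = r - (v:ℤ) then ∏ i ∈ Finset.univ.erase j, H i (x i) else 0) := by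
  rw [← Finset.sum_fiberwise_of_maps_to (g := fun x => x j) (t := t j)
    (fun x hx => (Fintype.mem_piFinset.mp hx) j)]
  apply Finset.sum_congr rfl
  intro v hv
  rw [Finset.mul_sum]
  apply Finset.sum_nbij' (fun x => Function.update x j 0) (fun y => Function.update y j v)
  · -- maps to
    intro x hx
    rw [Finset.mem_filter, Fintype.mem_piFinset] at hx
    rw [Fintype.mem_piFinset]
    intro i
    by_cases hij : i = j
    · subst hij; simp [Function.update]
    · rw [Function.update_of_ne hij, Function.update_of_ne hij]
      exact hx.1 i
  · intro y hy
    rw [Fintype.mem_piFinset] at hy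
    rw [Finset.mem_filter, Fintype.mem_piFinset]
    constructor
    · intro i
      by_cases hij : i = j
      · subst hij; simpa using hv
      · rw [Function.update_of_ne hij]
        have := hy i
        rwa [Function.update_of_ne hij] at this
    · simp
  · intro x hx
    rw [Finset.mem_filter] at hx
    rw [Function.update_idem, ← hx.2, Function.update_eq_self]
  · intro y hy
    rw [Fintype.mem_piFinset] at hy
    have := hy j
    rw [Function.update_self, Finset.mem_singleton] at this
    rw [Function.update_idem, ← this, Function.update_eq_self]
  · intro x hx
    rw [Finset.mem_filter] at hx
    have hxj : x j = v := hx.2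
    have hsum : ∑ i, ((Function.update x j 0 i : ℕ) : ℤ)
        = (∑ i, ((x i : ℕ) : ℤ)) - (v : ℤ) := by
      rw [← Finset.add_sum_erase _ _ (Finset.mem_univ j),
          ← Finset.add_sum_erase _ (fun i => ((x i : ℕ):ℤ)) (Finset.mem_univ j)]
      rw [Function.update_self, hxj]
      have : ∀ i ∈ Finset.univ.erase j,
          ((Function.update x j 0 i : ℕ) : ℤ) = ((x i : ℕ) : ℤ) := by
        intro i hi
        rw [Function.update_of_ne (Finset.mem_erase.mp hi).1]
      rw [Finset.sum_congr rfl this]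
      push_cast
      ring
    have hprod : ∏ i ∈ Finset.univ.erase j, H i (Function.update x j 0 i)
        = ∏ i ∈ Finset.univ.erase j, H i (x i) := by
      apply Finset.prod_congr rfl
      intro i hi
      rw [Function.update_of_ne (Finset.mem_erase.mp hi).1]
    rw [hsum, hprod, hxj]
    by_cases hc : (∑ i, ((x i : ℕ):ℤ)) = r
    · rw [if_pos hc, if_pos (by omega), mul_comm] 
    · rw [if_neg hc, if_neg (by omega), mul_zero]

end Peel

lemma sum_cast_Icc (a b : ℕ) (f : ℤ → ℤ) :
    ∑ k ∈ Finset.Icc (a:ℤ) (b:ℤ), f k = ∑ v ∈ Finset.Icc a b, f (v:ℤ) := by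
  refine Finset.sum_nbij' (fun k => k.toNat) (fun v => (v:ℤ)) ?_ ?_ ?_ ?_ ?_
  · intro k hk;  rw [Finset.mem_Icc] at *; omega
  · intro v hv;  rw [Finset.mem_Icc] at *; omega
  · intro k hk;  rw [Finset.mem_Icc] at hk; omega
  · intro v _; simp
  · intro k hk;  rw [Finset.mem_Icc] at hk; congr 1; omega

section Main2

variable {m : ℕ} (s l u : Fin m → ℕ)

lemma GF_eq (hus : ∀ j, u j ≤ s j) (L : List (Fin m)) (hL : L.Nodup) (r : ℤ) :
    GF s l u L r
    = ∑ x ∈ Fintype.piFinset (fun i => if i ∈ L then Finset.Icc (l i) (u i) else {0}),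
        (if (∑ i, ((x i : ℕ) : ℤ)) = r then ∏ i, ((s i).choose (x i) : ℤ) else 0) := by
  induction L generalizing r with
  | nil =>
    have hset : Fintype.piFinset (fun _ : Fin m => ({0} : Finset ℕ))
        = {fun _ => 0} := by
      ext x
      simp [Fintype.mem_piFinset, funext_iff]
    simp only [List.not_mem_nil, if_false, hset, Finset.sum_singleton]
    simp [GF, eq_comm]
  | cons a L' ih =>
    have haL : a ∉ L' := (List.nodup_cons.mp hL).1
    have hL' : L'.Nodup := (List.nodup_cons.mp hL).2
    -- LHS
    have lhs1 : GF s l u (a :: L') r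
        = ∑ v ∈ Finset.Icc (l a) (u a),
            ((s a).choose v : ℤ) * GF s l u L' (r - v) := by
      show convFn (s a) (gfun (s a) (l a) (u a)) (GF s l u L') r = _
      unfold convFn
      have husa : (u a : ℤ) ≤ (s a : ℤ) := by exact_mod_cast hus a
      rw [← Finset.sum_subset (s₁ := Finset.Icc ((l a : ℤ)) ((u a : ℤ)))
        (by intro k hk; rw [Finset.mem_Icc] at *; omega)
        (fun k hk hk' => by
          rw [Finset.mem_Icc] at *
          unfold gfun
          rw [if_neg (by omega), zero_mul])]
      rw [sum_cast_Icc]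
      apply Finset.sum_congr rfl
      intro v hv
      rw [Finset.mem_Icc] at hv
      unfold gfun
      rw [if_pos (by constructor <;> exact_mod_cast Nat.cast_le.mpr (by omega))]
      simp
    rw [lhs1]
    -- RHS via peel
    have hta : (fun i => if i ∈ a :: L' then Finset.Icc (l i) (u i) else ({0} : Finset ℕ)) a
        = Finset.Icc (l a) (u a) := by simp
    have hupdate : Function.update
          (fun i => if i ∈ a :: L' then Finset.Icc (l i) (u i) else ({0} : Finset ℕ)) a {0}
        = (fun i => if i ∈ L' then Finset.Icc (l i) (u i) else ({0} : Finset ℕ)) := by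
      funext i
      by_cases hij : i = a
      · subst hij
        rw [Function.update_self, if_neg haL]
      · rw [Function.update_of_ne hij]
        simp [List.mem_cons, hij]
    have body : ∀ x : Fin m → ℕ,
        (if (∑ i, ((x i : ℕ) : ℤ)) = r then ∏ i, ((s i).choose (x i) : ℤ) else 0)
        = (if (∑ i, ((x i : ℕ) : ℤ)) = r then
            ((s a).choose (x a) : ℤ) * ∏ i ∈ Finset.univ.erase a, ((s i).choose (x i) : ℤ)
          else 0) := by
      intro x
      rw [← Finset.mul_prod_erase Finset.univ
        (fun i => ((s i).choose (x i) : ℤ)) (Finset.mem_univ a)]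
    rw [Finset.sum_congr rfl (fun x _ => body x)]
    rw [peel_lemma _ a (fun v => ((s a).choose v : ℤ)) (fun i w => ((s i).choose w : ℤ)) r]
    rw [hupdate]
    rw [if_pos (List.mem_cons_self)]
    apply Finset.sum_congr rfl
    intro v _
    congr 1
    rw [ih hL' (r - (v:ℤ))]
    apply Finset.sum_congr rfl
    intro x hx
    rw [Fintype.mem_piFinset] at hx
    have hxa : x a = 0 := by
      have := hx a
      rw [if_neg haL, Finset.mem_singleton] at this
      exact this
    congr 1
    rw [← Finset.mul_prod_erase Finset.univ (fun i => ((s i).choose (x i) : ℤ))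
      (Finset.mem_univ a), hxa]
    simp

end Main2

section Assemble

variable {m : ℕ} {s l u : Fin m → ℕ}
  (hlu : ∀ j, l j ≤ u j) (hus : ∀ j, u j ≤ s j) (hsym : ∀ j, l j + u j = s j)

/-- integer version of the core count -/
def NZ (l u : Fin m → ℕ) (s : Fin m → ℕ) (r : ℤ) : ℤ :=
  ∑ x ∈ Fintype.piFinset (fun i => Finset.Icc (l i) (u i)),
    (if (∑ i, ((x i : ℕ) : ℤ)) = r then ∏ i, ((s i).choose (x i) : ℤ) else 0)

/-- convolution over all coordinates except `j` -/
noncomputable def MF (s l u : Fin m → ℕ) (j : Fin m) : ℤ → ℤ :=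
  GF s l u ((Finset.univ.erase j).toList)

include hlu hus hsym in
lemma MF_good (t : ℕ) (ht : t = ∑ j, s j) (j : Fin m) :
    GoodFn ((t : ℤ) - (s j : ℤ)) (MF s l u j) := by
  have h := GF_good s l u hlu hus hsym ((Finset.univ.erase j).toList)
  have hc : ((((Finset.univ.erase j).toList).map fun a => (s a : ℤ)).sum)
      = (t : ℤ) - (s j : ℤ) := by
    rw [Finset.sum_map_toList]
    have h1 : ∑ i, (s i : ℤ) = (s j : ℤ) + ∑ i ∈ Finset.univ.erase j, (s i : ℤ) :=
      (Finset.add_sum_erase _ _ (Finset.mem_univ j)).symm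
    have h2 : (t : ℤ) = ∑ i, (s i : ℤ) := by rw [ht]; push_cast; rfl
    omega
  rwa [hc] at h

include hus in
lemma NZ_decomp (j : Fin m) (F : ℕ → ℤ) (r : ℤ) :
    ∑ x ∈ Fintype.piFinset (fun i => Finset.Icc (l i) (u i)),
      (if (∑ i, ((x i : ℕ) : ℤ)) = r then
        F (x j) * ∏ i ∈ Finset.univ.erase j, ((s i).choose (x i) : ℤ) else 0)
    = ∑ v ∈ Finset.Icc (l j) (u j), F v * MF s l u j (r - (v:ℤ)) := by
  rw [peel_lemma (fun i => Finset.Icc (l i) (u i)) j F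
    (fun i w => ((s i).choose w : ℤ)) r]
  apply Finset.sum_congr rfl
  intro v _
  congr 1
  have hfam : Function.update (fun i => Finset.Icc (l i) (u i)) j ({0} : Finset ℕ)
      = (fun i => if i ∈ (Finset.univ.erase j).toList
          then Finset.Icc (l i) (u i) else ({0} : Finset ℕ)) := by
    funext i
    by_cases hij : i = j
    · subst hij
      rw [Function.update_self, if_neg (by simp [Finset.mem_toList])]
    · rw [Function.update_of_ne hij, if_pos (by simp [Finset.mem_toList, hij])]
  rw [hfam]
  unfold MF
  rw [GF_eq s l u hus _ (Finset.nodup_toList _) (r - (v:ℤ))]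
  apply Finset.sum_congr rfl
  intro x hx
  rw [Fintype.mem_piFinset] at hx
  have hxj : x j = 0 := by
    have := hx j
    rw [if_neg (by simp [Finset.mem_toList]), Finset.mem_singleton] at this
    exact this
  congr 1
  rw [← Finset.mul_prod_erase Finset.univ (fun i => ((s i).choose (x i) : ℤ))
    (Finset.mem_univ j), hxj]
  simp

end Assemble

section Assemble2

variable {m : ℕ} {s l u : Fin m → ℕ}
  (hlu : ∀ j, l j ≤ u j) (hus : ∀ j, u j ≤ s j) (hsym : ∀ j, l j + u j = s j)

include hus in
lemma NZ_mul (A : ℤ) (w : Fin m → ℕ → ℤ) (r : ℤ)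
    (hw : ∀ x : Fin m → ℕ, (∑ i, ((x i : ℕ) : ℤ)) = r → A = ∑ j, w j (x j)) :
    A * NZ l u s r
    = ∑ j, ∑ v ∈ Finset.Icc (l j) (u j),
        w j v * ((s j).choose v : ℤ) * MF s l u j (r - (v:ℤ)) := by
  unfold NZ
  rw [Finset.mul_sum]
  have e1 : ∀ x ∈ Fintype.piFinset (fun i => Finset.Icc (l i) (u i)),
      A * (if (∑ i, ((x i : ℕ) : ℤ)) = r then ∏ i, ((s i).choose (x i) : ℤ) else 0)
      = ∑ j, (if (∑ i, ((x i : ℕ) : ℤ)) = r then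
          (w j (x j) * ((s j).choose (x j) : ℤ))
            * ∏ i ∈ Finset.univ.erase j, ((s i).choose (x i) : ℤ) else 0) := by
    intro x _
    by_cases hc : (∑ i, ((x i : ℕ) : ℤ)) = r
    · rw [if_pos hc, hw x hc, Finset.sum_mul]
      apply Finset.sum_congr rfl
      intro j _
      rw [if_pos hc, ← Finset.mul_prod_erase Finset.univ
        (fun i => ((s i).choose (x i) : ℤ)) (Finset.mem_univ j), ← mul_assoc]
    · rw [if_neg hc, mul_zero]
      exact (Finset.sum_congr rfl (fun j _ => if_neg hc)).trans Finset.sum_const_zero |>.symm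
  rw [Finset.sum_congr rfl e1, Finset.sum_comm]
  apply Finset.sum_congr rfl
  intro j _
  rw [NZ_decomp hus j (fun v => w j v * ((s j).choose v : ℤ)) r]

lemma sum_Icc_bot {M : Type*} [AddCommMonoid M] (a b : ℕ) (hab : a ≤ b) (f : ℕ → M) :
    ∑ v ∈ Finset.Icc a b, f v = f a + ∑ v ∈ Finset.Icc (a+1) b, f v := by
  have : Finset.Icc a b = insert a (Finset.Icc (a+1) b) := by
    ext x; simp only [Finset.mem_Icc, Finset.mem_insert]; omega
  rw [this, Finset.sum_insert (by simp only [Finset.mem_Icc]; omega)]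

lemma sum_Icc_shift {M : Type*} [AddCommMonoid M] (a b : ℕ) (f : ℕ → M) :
    ∑ v ∈ Finset.Icc (a+1) (b+1), f v = ∑ v ∈ Finset.Icc a b, f (v+1) := by
  refine Finset.sum_nbij' (fun v => v - 1) (fun v => v + 1) ?_ ?_ ?_ ?_ ?_ <;>
    (intro v hv; simp only [Finset.mem_Icc] at *) <;> try omega
  congr 1; omega

include hlu hus hsym in
lemma perj_ineq (t n : ℕ) (ht : t = ∑ j, s j) (h1 : t ≤ 2 * n) (j : Fin m) :
    ∑ v ∈ Finset.Icc (l j) (u j),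
      (v : ℤ) * ((s j).choose v : ℤ) * MF s l u j (((n:ℤ)+1) - (v:ℤ))
    ≤ ∑ v ∈ Finset.Icc (l j) (u j),
      ((s j : ℤ) - v) * ((s j).choose v : ℤ) * MF s l u j ((n:ℤ) - (v:ℤ)) := by
  have good := MF_good hlu hus hsym t ht j
  have hM : ∀ a b : ℤ, a ≤ b → (t:ℤ) - (s j : ℤ) - b ≤ a → MF s l u j b ≤ MF s l u j a := by
    intro a b hab hrefl
    rw [good.symm b]
    exact good.mono _ _ hrefl (by omega)
  have hident : ∀ v : ℕ, v < s j →
      ((v:ℤ)+1) * ((s j).choose (v+1) : ℤ) = ((s j : ℤ) - v) * ((s j).choose v : ℤ) := by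
    intro v hv
    have h0 := congrArg (fun x : ℕ => (x : ℤ)) (Nat.choose_succ_right_eq (s j) v)
    have hcast : ((s j - v : ℕ) : ℤ) = (s j : ℤ) - v := by omega
    push_cast [hcast] at h0
    linear_combination h0
  rcases Nat.eq_zero_or_pos (l j) with hl0 | hlpos
  · -- l j = 0, so u j = s j : the two sums are equal
    have hu : u j = s j := by have := hsym j; omega
    rw [hl0, hu]
    have hIcc : Finset.Icc 0 (s j) = Finset.range (s j + 1) := by
      ext x; simp only [Finset.mem_Icc, Finset.mem_range]; omega
    rw [hIcc, Finset.sum_range_succ', Finset.sum_range_succ]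
    apply le_of_eq
    have z1 : ((0:ℕ):ℤ) * (((s j).choose 0 : ℕ) : ℤ) * MF s l u j (((n:ℤ)+1) - ((0:ℕ):ℤ)) = 0 := by
      push_cast; ring
    have z2 : ((s j : ℤ) - (s j : ℕ)) * (((s j).choose (s j) : ℕ) : ℤ)
        * MF s l u j ((n:ℤ) - ((s j : ℕ) : ℤ)) = 0 := by
      push_cast; ring
    rw [z1, z2, add_zero, add_zero]
    apply Finset.sum_congr rfl
    intro v hv
    rw [Finset.mem_range] at hv
    have : (((v:ℕ)+1 : ℕ) : ℤ) = (v:ℤ)+1 := by push_cast; ring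
    rw [this, hident v hv]
    congr 2
    push_cast
    ring
  · -- l j ≥ 1
    obtain ⟨l', hl'⟩ : ∃ l', l j = l' + 1 := ⟨l j - 1, by omega⟩
    obtain ⟨u', hu'⟩ : ∃ u', u j = u' + 1 := ⟨u j - 1, by have := hlu j; omega⟩
    have hl'u' : l' ≤ u' := by have := hlu j; omega
    set G : ℕ → ℤ := fun v => ((s j : ℤ) - v) * ((s j).choose v : ℤ) * MF s l u j ((n:ℤ) - (v:ℤ))
      with hG
    have lhs_eq : ∑ v ∈ Finset.Icc (l j) (u j),
        (v : ℤ) * ((s j).choose v : ℤ) * MF s l u j (((n:ℤ)+1) - (v:ℤ))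
        = ∑ v ∈ Finset.Icc l' u', G v := by
      rw [hl', hu', sum_Icc_shift]
      apply Finset.sum_congr rfl
      intro v hv
      rw [Finset.mem_Icc] at hv
      have hvs : v < s j := by have := hus j; omega
      have : ((v+1 : ℕ) : ℤ) = (v:ℤ)+1 := by push_cast; ring
      rw [hG, this, hident v hvs]
      congr 2
      push_cast
      ring
    have rhs_eq : ∑ v ∈ Finset.Icc (l j) (u j),
        ((s j : ℤ) - v) * ((s j).choose v : ℤ) * MF s l u j ((n:ℤ) - (v:ℤ))
        = ∑ v ∈ Finset.Icc (l'+1) (u'+1), G v := by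
      rw [hl', hu']
    rw [lhs_eq, rhs_eq]
    rw [sum_Icc_bot l' u' hl'u' G, Finset.sum_Icc_succ_top (by omega) G]
    have hGcmp : G l' ≤ G (u'+1) := by
      have e1 : G l' = ((l j : ℤ)) * ((s j).choose (u j) : ℤ)
          * MF s l u j ((n:ℤ) - (l j : ℤ) + 1) := by
        simp only [hG]
        have h1 : ((s j : ℤ) - l') * ((s j).choose l' : ℤ)
            = ((l':ℤ)+1) * ((s j).choose (l'+1) : ℤ) := by
          rw [hident l' (by have := hlu j; have := hus j; omega)]
        have h2 : (s j).choose (l'+1) = (s j).choose (u j) := by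
          rw [← hl']
          have : l j = s j - u j := by have := hsym j; omega
          rw [this, Nat.choose_symm (hus j)]
        rw [h1, h2, hl']
        have : (n:ℤ) - ((l':ℤ)) = (n:ℤ) - ((l'+1:ℕ):ℤ) + 1 := by push_cast; ring
        rw [this]
        push_cast
        ring
      have e2 : G (u'+1) = ((l j : ℤ)) * ((s j).choose (u j) : ℤ)
          * MF s l u j ((n:ℤ) - (u j : ℤ)) := by
        simp only [hG]
        rw [← hu']
        have : (s j : ℤ) - (u j : ℤ) = (l j : ℤ) := by
          have := hsym j; push_cast; omega
        rw [this]
      rw [e1, e2]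
      apply mul_le_mul_of_nonneg_left
      · apply hM
        · have := hlu j; push_cast; omega
        · have hsj := hsym j
          push_cast
          omega
      · positivity
    omega

end Assemble2

section Final

variable {m : ℕ} {s l u : Fin m → ℕ}
  (hlu : ∀ j, l j ≤ u j) (hus : ∀ j, u j ≤ s j) (hsym : ∀ j, l j + u j = s j)

include hlu hus hsym in
lemma step_NZ (t n : ℕ) (ht : t = ∑ j, s j) (h1 : t ≤ 2 * n) :
    ((n:ℤ)+1) * NZ l u s ((n:ℤ)+1) ≤ ((t:ℤ) - (n:ℤ)) * NZ l u s (n:ℤ) := by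
  have id1 := NZ_mul (l := l) (u := u) (s := s) hus ((n:ℤ)+1) (fun _ v => (v:ℤ)) ((n:ℤ)+1)
    (fun x hx => hx.symm)
  have id2 := NZ_mul (l := l) (u := u) (s := s) hus ((t:ℤ) - (n:ℤ)) (fun j v => (s j : ℤ) - (v:ℤ)) (n:ℤ)
    (fun x hx => by
      rw [Finset.sum_sub_distrib, hx, ht]
      push_cast
      ring)
  rw [id1, id2]
  exact Finset.sum_le_sum (fun j _ => perj_ineq hlu hus hsym t n ht h1 j)

include hlu hus hsym in
lemma step_N (t : ℕ) (ht : t = ∑ j, s j) (N : ℕ → ℕ)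
    (hN : ∀ r, N r = ∑ x ∈ (Fintype.piFinset fun j => Finset.Icc (l j) (u j)).filter
        (fun x => ∑ j, x j = r), ∏ j, (s j).choose (x j))
    (n : ℕ) (h1 : t ≤ 2 * n) (hn : n ≤ t) :
    (n+1) * N (n+1) ≤ (t - n) * N n := by
  have hcast : ∀ r : ℕ, (N r : ℤ) = NZ l u s (r : ℤ) := by
    intro r
    rw [hN r, NZ, Finset.sum_filter]
    push_cast
    apply Finset.sum_congr rfl
    intro x _
    have : (∑ j, x j = r) ↔ ((∑ i, ((x i : ℕ):ℤ)) = (r:ℤ)) := by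
      rw [← Nat.cast_inj (R := ℤ)]
      push_cast
      rfl
    split_ifs with hc1 hc2 hc2
    · rfl
    · exact absurd (this.mp hc1) hc2
    · exact absurd (this.mpr hc2) hc1
    · rfl
  have h := step_NZ hlu hus hsym t n ht h1
  rw [← hcast n] at h
  have harg : ((n:ℤ)+1) = ((n+1 : ℕ) : ℤ) := by push_cast; ring
  rw [harg, ← hcast (n+1)] at h
  have : ((((n+1) * N (n+1) : ℕ)) : ℤ) ≤ (((t - n) * N n : ℕ) : ℤ) := by
    push_cast [Nat.cast_sub hn]
    push_cast at h
    linarith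
  exact_mod_cast this

include hlu hus hsym in
lemma step_choose (t : ℕ) (ht : t = ∑ j, s j) (N : ℕ → ℕ)
    (hN : ∀ r, N r = ∑ x ∈ (Fintype.piFinset fun j => Finset.Icc (l j) (u j)).filter
        (fun x => ∑ j, x j = r), ∏ j, (s j).choose (x j))
    (n : ℕ) (h1 : t ≤ 2 * n) (hn : n < t) :
    N (n+1) * t.choose n ≤ N n * t.choose (n+1) := by
  have h := step_N hlu hus hsym t ht N hN n h1 (le_of_lt hn)
  have hb : t.choose (n+1) * (n+1) = t.choose n * (t - n) := Nat.choose_succ_right_eq t n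
  have key : (N (n+1) * t.choose n) * (n+1) ≤ (N n * t.choose (n+1)) * (n+1) := by
    calc (N (n+1) * t.choose n) * (n+1) = ((n+1) * N (n+1)) * t.choose n := by ring
    _ ≤ ((t - n) * N n) * t.choose n := Nat.mul_le_mul_right _ h
    _ = N n * (t.choose n * (t - n)) := by ring
    _ = N n * (t.choose (n+1) * (n+1)) := by rw [hb]
    _ = (N n * t.choose (n+1)) * (n+1) := by ring
  exact Nat.le_of_mul_le_mul_right key (by omega)

end Final

theorem symmetric_core_ordering_upper (m : ℕ) (hm : 2 ≤ m) (s l u : Fin m → ℕ)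
    (hlu : ∀ j, l j ≤ u j) (hus : ∀ j, u j ≤ s j)
    (hsym : ∀ j, l j + u j = s j)
    (t : ℕ) (ht : t = ∑ j, s j)
    (N : ℕ → ℕ)
    (hN : ∀ r, N r = ∑ x ∈ (Fintype.piFinset fun j => Finset.Icc (l j) (u j)).filter
        (fun x => ∑ j, x j = r), ∏ j, (s j).choose (x j))
    (n n' : ℕ) (h1 : t ≤ 2 * n) (h2 : n < n') (h3 : n' ≤ t) :
    N n' * t.choose n ≤ N n * t.choose n' := by
  obtain ⟨d, hd⟩ : ∃ d : ℕ, n' = n + 1 + d := ⟨n' - n - 1, by omega⟩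
  subst hd
  clear h2
  induction d with
  | zero =>
    exact step_choose hlu hus hsym t ht N hN n h1 (by omega)
  | succ d ih =>
    set k := n + 1 + d with hk
    have hkt : k < t := by omega
    have ihk : N k * t.choose n ≤ N n * t.choose k := ih (by omega)
    have stepk : N (k+1) * t.choose k ≤ N k * t.choose (k+1) :=
      step_choose hlu hus hsym t ht N hN k (by omega) hkt
    have hpos : 0 < t.choose k := Nat.choose_pos (by omega)
    have key : (N (k+1) * t.choose n) * t.choose k ≤ (N n * t.choose (k+1)) * t.choose k := by
      calc (N (k+1) * t.choose n) * t.choose k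
          = (N (k+1) * t.choose k) * t.choose n := by ring
        _ ≤ (N k * t.choose (k+1)) * t.choose n := Nat.mul_le_mul_right _ stepk
        _ = (N k * t.choose n) * t.choose (k+1) := by ring
        _ ≤ (N n * t.choose k) * t.choose (k+1) := Nat.mul_le_mul_right _ ihk
        _ = (N n * t.choose (k+1)) * t.choose k := by ring
    have := Nat.le_of_mul_le_mul_right key hpos
    have harg : n + 1 + (d + 1) = k + 1 := by omega
    rw [harg]
    exact this
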